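/- arXiv:1701.04246 — 2 statements merged into one kernel-verified Lean document; each statement's English description precedes it below -/
import Mathlib

section
/- Let A and B be Hermitian complex q×q matrices and let D := B - A. Then the open matricial interval (A,B) := {X Hermitian : A < X < B} (where A < X means X - A is positive definite) is nonempty if and only if D is positive definite. In this case, (A,B) = {A + √D · K · √D : K Hermitian with 0 < K < I}. -/
open Matrix ComplexOrder

/-- The positive semidefinite square root of a positive semidefinite matrix (the definition
`Matrix.PosSemidef.sqrt` of the older Mathlib, which has since been removed). -/
noncomputable def Matrix.PosSemidef.sqrt {n : Type*} [Fintype n] [DecidableEq n] {𝕜 : Type*}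
    [RCLike 𝕜] {A : Matrix n n 𝕜} (hA : A.PosSemidef) : Matrix n n 𝕜 :=
  (hA.1.eigenvectorUnitary : Matrix n n 𝕜) * diagonal (((↑) : ℝ → 𝕜) ∘ (√·) ∘ hA.1.eigenvalues) *
    (star hA.1.eigenvectorUnitary : Matrix n n 𝕜)

section Aux
variable {n : Type*} [Fintype n] [DecidableEq n]

/-- conjugation of a posdef matrix by an invertible matrix -/
lemma posDef_conj_aux {M N : Matrix n n ℂ} (hM : M.PosDef) (hN : IsUnit N) :
    (Nᴴ * M * N).PosDef := by
  exact hM.conjTranspose_mul_mul_same (Matrix.mulVec_injective_iff_isUnit.2 hN)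

lemma Matrix.PosSemidef.sq_sqrt {A : Matrix n n ℂ} (hA : A.PosSemidef) : hA.sqrt ^ 2 = A := by
  set U := hA.1.eigenvectorUnitary with hUdef
  conv_rhs => rw [hA.1.spectral_theorem]
  rw [Unitary.conjStarAlgAut_apply, Matrix.PosSemidef.sqrt, pow_two]
  have hU : (star U : Matrix n n ℂ) * U = 1 := Unitary.coe_star_mul_self U
  calc _ = (U : Matrix n n ℂ) * (diagonal (((↑) : ℝ → ℂ) ∘ (√·) ∘ hA.1.eigenvalues) *
        ((star U : Matrix n n ℂ) * U) * diagonal (((↑) : ℝ → ℂ) ∘ (√·) ∘ hA.1.eigenvalues)) *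
        (star U : Matrix n n ℂ) := by (simp only [Matrix.mul_assoc]) <;> rfl
    _ = _ := by
      rw [hU, Matrix.mul_one, diagonal_mul_diagonal]
      congr 3
      funext i
      simp only [Function.comp_apply, RCLike.ofReal_real_eq_id, id]
      rw [← Complex.ofReal_mul, Real.mul_self_sqrt (hA.eigenvalues_nonneg i)]
      rfl

lemma sqrt_posDef_aux {D : Matrix n n ℂ} (hD : D.PosDef) : hD.posSemidef.sqrt.PosDef := by
  set U := hD.posSemidef.1.eigenvectorUnitary with hUdef
  have hU : IsUnit (star U : Matrix n n ℂ) := (Unitary.toUnits (star U)).isUnit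
  have hdiag : (diagonal (((↑) : ℝ → ℂ) ∘ (√·) ∘ hD.posSemidef.1.eigenvalues)).PosDef := by
    rw [posDef_diagonal_iff]
    intro i
    simp only [Function.comp_apply]
    exact Complex.zero_lt_real.2 (Real.sqrt_pos.2 (hD.eigenvalues_pos i))
  have hS : hD.posSemidef.sqrt = (star U : Matrix n n ℂ)ᴴ *
      diagonal (((↑) : ℝ → ℂ) ∘ (√·) ∘ hD.posSemidef.1.eigenvalues) * (star U : Matrix n n ℂ) := by
    (rw [← Matrix.star_eq_conjTranspose, star_star]) <;> rfl
  rw [hS]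
  exact posDef_conj_aux hdiag hU

lemma mem_of_aux {A B : Matrix n n ℂ} (hA : A.IsHermitian) (hD : (B - A).PosDef)
    {K : Matrix n n ℂ} (hK : K.IsHermitian) (hKp : K.PosDef) (hK1 : (1 - K).PosDef) :
    (A + hD.posSemidef.sqrt * K * hD.posSemidef.sqrt).IsHermitian ∧
    ((A + hD.posSemidef.sqrt * K * hD.posSemidef.sqrt) - A).PosDef ∧
    (B - (A + hD.posSemidef.sqrt * K * hD.posSemidef.sqrt)).PosDef := by
  set S := hD.posSemidef.sqrt with hSdef
  have hS : S.PosDef := sqrt_posDef_aux hD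
  have hSH : Sᴴ = S := hS.isHermitian
  have hSS : S * S = B - A := by rw [← pow_two]; exact hD.posSemidef.sq_sqrt
  refine ⟨?_, ?_, ?_⟩
  · refine hA.add ?_
    simp [Matrix.IsHermitian, conjTranspose_mul, hSH, hK.eq, Matrix.mul_assoc]
  · have : (A + S * K * S) - A = Sᴴ * K * S := by rw [hSH]; abel
    rw [this]
    exact posDef_conj_aux hKp hS.isUnit
  · have : B - (A + S * K * S) = Sᴴ * (1 - K) * S := by
      rw [hSH, Matrix.mul_sub, Matrix.sub_mul, Matrix.mul_one, hSS]; abel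
    rw [this]
    exact posDef_conj_aux hK1 hS.isUnit

lemma exists_K_aux {A B : Matrix n n ℂ} (hD : (B - A).PosDef)
    {X : Matrix n n ℂ} (hX : X.IsHermitian) (h1 : (X - A).PosDef) (h2 : (B - X).PosDef) :
    ∃ K : Matrix n n ℂ, K.IsHermitian ∧ K.PosDef ∧ (1 - K).PosDef ∧
      X = A + hD.posSemidef.sqrt * K * hD.posSemidef.sqrt := by
  set S := hD.posSemidef.sqrt with hSdef
  have hS : S.PosDef := sqrt_posDef_aux hD
  have hSH : Sᴴ = S := hS.isHermitian
  have hSS : S * S = B - A := by rw [← pow_two]; exact hD.posSemidef.sq_sqrt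
  have hdet : IsUnit S.det := isUnit_iff_ne_zero.2 hS.det_pos.ne'
  set T := S⁻¹ with hTdef
  have hT : T.PosDef := hS.inv
  have hTH : Tᴴ = T := hT.isHermitian
  have hST : S * T = 1 := mul_nonsing_inv S hdet
  have hTS : T * S = 1 := nonsing_inv_mul S hdet
  refine ⟨T * (X - A) * T, ?_, ?_, ?_, ?_⟩
  · have := posDef_conj_aux h1 hT.isUnit
    rw [hTH] at this
    exact this.isHermitian
  · have := posDef_conj_aux h1 hT.isUnit
    rwa [hTH] at this
  · have heq : 1 - T * (X - A) * T = T * (B - X) * T := by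
      have h1' : T * (B - A) * T = 1 := by
        rw [← hSS]
        calc T * (S * S) * T = (T * S) * (S * T) := by simp only [Matrix.mul_assoc]
          _ = 1 := by rw [hTS, hST, Matrix.one_mul]
      have : (B : Matrix n n ℂ) - X = (B - A) - (X - A) := by abel
      rw [this, Matrix.mul_sub T (B - A) (X - A), Matrix.sub_mul, h1']
    rw [heq]
    have := posDef_conj_aux h2 hT.isUnit
    rwa [hTH] at this
  · have : S * (T * (X - A) * T) * S = X - A := by
      calc S * (T * (X - A) * T) * S = (S * T) * (X - A) * (T * S) := by
            simp only [Matrix.mul_assoc]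
        _ = X - A := by rw [hST, hTS, Matrix.one_mul, Matrix.mul_one]
    rw [this]; abel

lemma half_one_posDef : ((1/2 : ℂ) • (1 : Matrix n n ℂ)).PosDef := by
  rw [← Matrix.diagonal_one, ← Matrix.diagonal_smul]
  refine Matrix.PosDef.diagonal fun i => ?_
  simp only [Pi.smul_apply, Pi.one_apply, smul_eq_mul, mul_one]
  rw [show (1/2 : ℂ) = ((1/2 : ℝ) : ℂ) by norm_num]
  rw [Complex.zero_lt_real]
  norm_num

end Aux

/-- The open matricial interval `(A,B)` is nonempty iff `D = B - A` is positive
definite, in which case `(A,B) = {A + √D K √D : 0 < K < I}`. -/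
theorem stmt_1 (q : ℕ) (A B : Matrix (Fin q) (Fin q) ℂ)
    (hA : A.IsHermitian) (hB : B.IsHermitian) :
    ((∃ X : Matrix (Fin q) (Fin q) ℂ, X.IsHermitian ∧ (X - A).PosDef ∧ (B - X).PosDef)
      ↔ (B - A).PosDef) ∧
    ∀ hD : (B - A).PosDef,
      {X : Matrix (Fin q) (Fin q) ℂ | X.IsHermitian ∧ (X - A).PosDef ∧ (B - X).PosDef} =
        {Y : Matrix (Fin q) (Fin q) ℂ | ∃ K : Matrix (Fin q) (Fin q) ℂ,
          K.IsHermitian ∧ K.PosDef ∧ (1 - K).PosDef ∧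
          Y = A + hD.posSemidef.sqrt * K * hD.posSemidef.sqrt} := by
  constructor
  · constructor
    · rintro ⟨X, hX, h1, h2⟩
      have : B - A = (B - X) + (X - A) := by abel
      rw [this]
      exact h2.add_posSemidef h1.posSemidef
    · intro hD
      have hK : ((1/2 : ℂ) • (1 : Matrix (Fin q) (Fin q) ℂ)).IsHermitian :=
        half_one_posDef.isHermitian
      have hK1 : ((1 : Matrix (Fin q) (Fin q) ℂ) - (1/2 : ℂ) • 1).PosDef := by
        have : (1 : Matrix (Fin q) (Fin q) ℂ) - (1/2 : ℂ) • 1 = (1/2 : ℂ) • 1 := by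
          rw [eq_comm, eq_sub_iff_add_eq, ← add_smul]; norm_num
        rw [this]; exact half_one_posDef
      obtain ⟨h1, h2, h3⟩ := mem_of_aux hA hD hK half_one_posDef hK1
      exact ⟨_, h1, h2, h3⟩
  · intro hD
    ext X
    constructor
    · rintro ⟨hX, h1, h2⟩
      exact exists_K_aux hD hX h1 h2
    · rintro ⟨K, hK, hKp, hK1, rfl⟩
      exact mem_of_aux hA hD hK hKp hK1
end

section
/- Let α < β be real numbers, let n ≥ 0, and let s_0, ..., s_{2n+2} be complex q×q matrices. If the Hankel matrix H^{(c)}_n := (-αβ s_{j+k} + (α+β) s_{j+k+1} - s_{j+k+2})_{j,k=0}^n is positive semidefinite and H_{n+1} := (s_{j+k})_{j,k=0}^{n+1} is positive semidefinite, then both H^{(a)}_n := (-α s_{j+k} + s_{j+k+1})_{j,k=0}^n and H^{(b)}_n := (β s_{j+k} - s_{j+k+1})_{j,k=0}^n are positive semidefinite. -/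
open Matrix ComplexOrder

def hankelBlk (q m : ℕ) (t : ℕ → Matrix (Fin q) (Fin q) ℂ) :
    Matrix (Fin m × Fin q) (Fin m × Fin q) ℂ :=
  Matrix.of fun ja kb => t ((ja.1 : ℕ) + (kb.1 : ℕ)) ja.2 kb.2

section aux
variable {q n : ℕ}

/-- padding: extend a vector by a zero block at the end -/
def padU (n q : ℕ) (x : Fin (n+1) × Fin q → ℂ) : Fin (n+2) × Fin q → ℂ :=
  fun p => if h : (p.1 : ℕ) < n + 1 then x (⟨p.1, h⟩, p.2) else 0

/-- padding: shift a vector by a zero block at the start -/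
def padV (n q : ℕ) (x : Fin (n+1) × Fin q → ℂ) : Fin (n+2) × Fin q → ℂ :=
  fun p => if h : (p.1 : ℕ) ≠ 0 then x (⟨(p.1 : ℕ) - 1, by omega⟩, p.2) else 0

@[simp] lemma padU_castSucc (x : Fin (n+1) × Fin q → ℂ) (j : Fin (n+1)) (a : Fin q) :
    padU n q x (j.castSucc, a) = x (j, a) := by
  simp [padU, j.isLt]

@[simp] lemma padU_last (x : Fin (n+1) × Fin q → ℂ) (a : Fin q) :
    padU n q x (Fin.last (n+1), a) = 0 := by
  simp [padU]

@[simp] lemma padV_succ (x : Fin (n+1) × Fin q → ℂ) (j : Fin (n+1)) (a : Fin q) :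
    padV n q x (j.succ, a) = x (j, a) := by
  simp [padV]

@[simp] lemma padV_zero (x : Fin (n+1) × Fin q → ℂ) (a : Fin q) :
    padV n q x ((0 : Fin (n+2)), a) = 0 := by
  simp [padV]

lemma form_expand {m : ℕ} (t : ℕ → Matrix (Fin q) (Fin q) ℂ) (y z : Fin m × Fin q → ℂ) :
    star y ⬝ᵥ (hankelBlk q m t *ᵥ z)
      = ∑ j : Fin m, ∑ a : Fin q, ∑ k : Fin m, ∑ b : Fin q,
          (starRingEnd ℂ) (y (j, a)) * (t ((j:ℕ)+(k:ℕ)) a b * z (k, b)) := by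
  simp [dotProduct, mulVec, hankelBlk, Fintype.sum_prod_type, Finset.mul_sum]

lemma form_uu (s : ℕ → Matrix (Fin q) (Fin q) ℂ) (x : Fin (n+1) × Fin q → ℂ) :
    star (padU n q x) ⬝ᵥ (hankelBlk q (n+2) s *ᵥ padU n q x)
      = star x ⬝ᵥ (hankelBlk q (n+1) s *ᵥ x) := by
  rw [form_expand, form_expand]
  rw [Fin.sum_univ_castSucc (n := n+1)]
  simp only [padU_last, map_zero, zero_mul, Finset.sum_const_zero, add_zero]
  refine Finset.sum_congr rfl fun j _ => Finset.sum_congr rfl fun a _ => ?_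
  rw [Fin.sum_univ_castSucc (n := n+1)]
  simp [Fin.coe_castSucc]

lemma form_uv (s : ℕ → Matrix (Fin q) (Fin q) ℂ) (x : Fin (n+1) × Fin q → ℂ) :
    star (padU n q x) ⬝ᵥ (hankelBlk q (n+2) s *ᵥ padV n q x)
      = star x ⬝ᵥ (hankelBlk q (n+1) (fun j => s (j+1)) *ᵥ x) := by
  rw [form_expand, form_expand]
  rw [Fin.sum_univ_castSucc (n := n+1)]
  simp only [padU_last, map_zero, zero_mul, Finset.sum_const_zero, add_zero]
  refine Finset.sum_congr rfl fun j _ => Finset.sum_congr rfl fun a _ => ?_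
  rw [Fin.sum_univ_succ (n := n+1)]
  simp only [padV_zero, mul_zero, zero_mul, Finset.sum_const_zero, zero_add]
  refine Finset.sum_congr rfl fun k _ => Finset.sum_congr rfl fun b _ => ?_
  rw [padU_castSucc, padV_succ,
    show ((j.castSucc:ℕ)+((k.succ : Fin (n+2)):ℕ)) = (j:ℕ)+(k:ℕ)+1 by
      simp only [Fin.coe_castSucc, Fin.val_succ]; omega]

lemma form_vu (s : ℕ → Matrix (Fin q) (Fin q) ℂ) (x : Fin (n+1) × Fin q → ℂ) :
    star (padV n q x) ⬝ᵥ (hankelBlk q (n+2) s *ᵥ padU n q x)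
      = star x ⬝ᵥ (hankelBlk q (n+1) (fun j => s (j+1)) *ᵥ x) := by
  rw [form_expand, form_expand]
  rw [Fin.sum_univ_succ (n := n+1)]
  simp only [padV_zero, map_zero, zero_mul, Finset.sum_const_zero, zero_add]
  refine Finset.sum_congr rfl fun j _ => Finset.sum_congr rfl fun a _ => ?_
  rw [Fin.sum_univ_castSucc (n := n+1)]
  simp only [padU_last, mul_zero, zero_mul, Finset.sum_const_zero, add_zero]
  refine Finset.sum_congr rfl fun k _ => Finset.sum_congr rfl fun b _ => ?_
  rw [padU_castSucc, padV_succ,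
    show (((j.succ : Fin (n+2)):ℕ)+(k.castSucc:ℕ)) = (j:ℕ)+(k:ℕ)+1 by
      simp only [Fin.coe_castSucc, Fin.val_succ]; omega]

lemma form_vv (s : ℕ → Matrix (Fin q) (Fin q) ℂ) (x : Fin (n+1) × Fin q → ℂ) :
    star (padV n q x) ⬝ᵥ (hankelBlk q (n+2) s *ᵥ padV n q x)
      = star x ⬝ᵥ (hankelBlk q (n+1) (fun j => s (j+2)) *ᵥ x) := by
  rw [form_expand, form_expand]
  rw [Fin.sum_univ_succ (n := n+1)]
  simp only [padV_zero, map_zero, zero_mul, Finset.sum_const_zero, zero_add]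
  refine Finset.sum_congr rfl fun j _ => Finset.sum_congr rfl fun a _ => ?_
  rw [Fin.sum_univ_succ (n := n+1)]
  simp only [padV_zero, mul_zero, zero_mul, Finset.sum_const_zero, zero_add]
  refine Finset.sum_congr rfl fun k _ => Finset.sum_congr rfl fun b _ => ?_
  rw [padV_succ, padV_succ,
    show (((j.succ : Fin (n+2)):ℕ)+((k.succ : Fin (n+2)):ℕ)) = (j:ℕ)+(k:ℕ)+2 by
      simp only [Fin.val_succ]; omega]

lemma hankelBlk_isHermitian {m : ℕ} (t : ℕ → Matrix (Fin q) (Fin q) ℂ)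
    (ht : ∀ j k : Fin m, (t ((j:ℕ)+(k:ℕ))).IsHermitian) : (hankelBlk q m t).IsHermitian := by
  ext ⟨j,a⟩ ⟨k,b⟩
  simp only [conjTranspose_apply, hankelBlk, Matrix.of_apply]
  rw [show (k:ℕ)+(j:ℕ) = (j:ℕ)+(k:ℕ) from Nat.add_comm _ _]
  exact congrFun (congrFun (ht j k) a) b

lemma herm_form_real {ι : Type*} [Fintype ι] {M : Matrix ι ι ℂ} (h : M.IsHermitian)
    (x : ι → ℂ) :
    ((star x ⬝ᵥ (M *ᵥ x)).re : ℂ) = star x ⬝ᵥ (M *ᵥ x) := by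
  rw [← Complex.conj_eq_iff_re]
  calc (starRingEnd ℂ) (star x ⬝ᵥ M *ᵥ x)
      = star (star (star (M *ᵥ x) ⬝ᵥ x)) := by rw [← star_dotProduct]; rfl
    _ = star (M *ᵥ x) ⬝ᵥ x := star_star _
    _ = (star x ᵥ* Mᴴ) ⬝ᵥ x := by rw [star_mulVec]
    _ = star x ⬝ᵥ (Mᴴ *ᵥ x) := (dotProduct_mulVec _ _ _).symm
    _ = star x ⬝ᵥ (M *ᵥ x) := by rw [h.eq]

end aux

/-- if `H^{(c)}_n` and `H_{n+1}` are positive semidefinite (for real `α < β`),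
then both `H^{(a)}_n` and `H^{(b)}_n` are positive semidefinite. -/
theorem stmt_12 (q n : ℕ) (α β : ℝ) (hαβ : α < β) (s : ℕ → Matrix (Fin q) (Fin q) ℂ)
    (hc : (hankelBlk q (n + 1)
      (fun j => -((α : ℂ) * β) • s j + ((α : ℂ) + β) • s (j + 1) - s (j + 2))).PosSemidef)
    (h1 : (hankelBlk q (n + 2) s).PosSemidef) :
    (hankelBlk q (n + 1) (fun j => -(α : ℂ) • s j + s (j + 1))).PosSemidef ∧
      (hankelBlk q (n + 1) (fun j => (β : ℂ) • s j - s (j + 1))).PosSemidef := by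
  -- each s m, m ≤ 2n+2, is Hermitian
  have sHerm : ∀ m : ℕ, m ≤ 2*n + 2 → (s m).IsHermitian := by
    intro m hm
    have hj : min m (n+1) < n + 2 := by omega
    have hk : m - min m (n+1) < n + 2 := by omega
    have := h1.1
    ext a b
    have h3 := congrFun (congrFun this ((⟨min m (n+1), hj⟩ : Fin (n+2)), a))
      ((⟨m - min m (n+1), hk⟩ : Fin (n+2)), b)
    simp only [conjTranspose_apply, hankelBlk, Matrix.of_apply] at h3
    rw [show m - min m (n+1) + min m (n+1) = m by omega,
      show min m (n+1) + (m - min m (n+1)) = m by omega] at h3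
    simpa [conjTranspose_apply] using h3
  -- Hermitian-ness of shifted Hankel blocks H0 H1 H2
  have H0herm : (hankelBlk q (n+1) s).IsHermitian :=
    hankelBlk_isHermitian _ fun j k => sHerm _ (by omega)
  have H1herm : (hankelBlk q (n+1) (fun j => s (j+1))).IsHermitian :=
    hankelBlk_isHermitian _ fun j k => sHerm _ (by omega)
  have H2herm : (hankelBlk q (n+1) (fun j => s (j+2))).IsHermitian :=
    hankelBlk_isHermitian _ fun j k => sHerm _ (by omega)
  -- matrix decompositions
  have decompC : hankelBlk q (n + 1)
      (fun j => -((α : ℂ) * β) • s j + ((α : ℂ) + β) • s (j + 1) - s (j + 2))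
      = -((α:ℂ)*β) • hankelBlk q (n+1) s + ((α:ℂ)+β) • hankelBlk q (n+1) (fun j => s (j+1))
        - hankelBlk q (n+1) (fun j => s (j+2)) := by
    ext ⟨j,a⟩ ⟨k,b⟩; simp [hankelBlk]
  have decompA : hankelBlk q (n + 1) (fun j => -(α : ℂ) • s j + s (j + 1))
      = -(α:ℂ) • hankelBlk q (n+1) s + hankelBlk q (n+1) (fun j => s (j+1)) := by
    ext ⟨j,a⟩ ⟨k,b⟩; simp [hankelBlk]
  have decompB : hankelBlk q (n + 1) (fun j => (β : ℂ) • s j - s (j + 1))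
      = (β:ℂ) • hankelBlk q (n+1) s - hankelBlk q (n+1) (fun j => s (j+1)) := by
    ext ⟨j,a⟩ ⟨k,b⟩; simp [hankelBlk]
  -- the key pointwise inequalities
  have key : ∀ x : Fin (n+1) × Fin q → ℂ,
      0 ≤ (star x ⬝ᵥ (hankelBlk q (n+1) (fun j => s (j+1)) *ᵥ x)).re
          - α * (star x ⬝ᵥ (hankelBlk q (n+1) s *ᵥ x)).re
      ∧ 0 ≤ β * (star x ⬝ᵥ (hankelBlk q (n+1) s *ᵥ x)).re
          - (star x ⬝ᵥ (hankelBlk q (n+1) (fun j => s (j+1)) *ᵥ x)).re := by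
    intro x
    have eh := herm_form_real H0herm x
    have ek := herm_form_real H1herm x
    have el := herm_form_real H2herm x
    set hr := (star x ⬝ᵥ (hankelBlk q (n+1) s *ᵥ x)).re with hhr
    set kr := (star x ⬝ᵥ (hankelBlk q (n+1) (fun j => s (j+1)) *ᵥ x)).re with hkr
    set lr := (star x ⬝ᵥ (hankelBlk q (n+1) (fun j => s (j+2)) *ᵥ x)).re with hlr
    -- h ≥ 0, l ≥ 0
    have hpos : 0 ≤ hr := by
      have := h1.dotProduct_mulVec_nonneg (padU n q x); rw [form_uu] at this
      rw [← eh, ← Complex.ofReal_zero] at this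
      exact Complex.real_le_real.mp this
    have lpos : 0 ≤ lr := by
      have := h1.dotProduct_mulVec_nonneg (padV n q x); rw [form_vv] at this
      rw [← el, ← Complex.ofReal_zero] at this
      exact Complex.real_le_real.mp this
    -- the quadratic p(λ) = lr λ² - 2 kr λ + hr is nonneg
    have quad : ∀ lam : ℝ, 0 ≤ lr * (lam * lam) + (-(2 * kr)) * lam + hr := by
      intro lam
      have := h1.dotProduct_mulVec_nonneg (padU n q x - (lam : ℂ) • padV n q x)
      have hst : star (padU n q x - (lam : ℂ) • padV n q x)
          = star (padU n q x) - (lam : ℂ) • star (padV n q x) := by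
        ext p; simp [Pi.star_apply, star_sub, Complex.conj_ofReal]
      rw [hst, Matrix.mulVec_sub, Matrix.mulVec_smul] at this
      rw [dotProduct_sub, sub_dotProduct, sub_dotProduct, smul_dotProduct,
        dotProduct_smul, dotProduct_smul, smul_dotProduct] at this
      rw [form_uu, form_uv, form_vu, form_vv] at this
      rw [← eh, ← ek, ← el] at this
      simp only [smul_eq_mul] at this
      have : (0:ℂ) ≤ ((lr * (lam * lam) + (-(2 * kr)) * lam + hr : ℝ) : ℂ) := by
        convert this using 1
        push_cast
        ring
      rw [← Complex.ofReal_zero] at this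
      exact Complex.real_le_real.mp this
    -- discriminant: kr² ≤ lr * hr
    have disc : kr * kr ≤ lr * hr := by
      have := discrim_le_zero quad
      rw [discrim] at this
      nlinarith [this]
    -- the constraint from hc
    have hcc : 0 ≤ -(α*β) * hr + (α+β) * kr - lr := by
      have := hc.dotProduct_mulVec_nonneg x
      rw [decompC] at this
      rw [Matrix.sub_mulVec, Matrix.add_mulVec, Matrix.smul_mulVec,
        Matrix.smul_mulVec, dotProduct_sub, dotProduct_add,
        dotProduct_smul, dotProduct_smul] at this
      rw [← eh, ← ek, ← el] at this
      simp only [smul_eq_mul] at this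
      have : (0:ℂ) ≤ ((-(α*β) * hr + (α+β) * kr - lr : ℝ) : ℂ) := by
        convert this using 1
        push_cast
        ring
      rw [← Complex.ofReal_zero] at this
      exact Complex.real_le_real.mp this
    -- real algebra
    have hAB : 0 ≤ (kr - α*hr) * (β*hr - kr) := by
      nlinarith [mul_nonneg hpos hcc, disc]
    have hsum : 0 ≤ (kr - α*hr) + (β*hr - kr) := by
      nlinarith [mul_nonneg (sub_nonneg.mpr hαβ.le) hpos]
    constructor
    · by_contra hA
      push_neg at hA
      have hB : 0 < β*hr - kr := by linarith
      nlinarith [mul_pos (by linarith : (0:ℝ) < α*hr - kr) hB]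
    · by_contra hB
      push_neg at hB
      have hA : 0 < kr - α*hr := by linarith
      nlinarith [mul_pos hA (by linarith : (0:ℝ) < kr - β*hr)]
  constructor
  · refine posSemidef_iff_dotProduct_mulVec.mpr ⟨hankelBlk_isHermitian _ fun j k => ?_, fun x => ?_⟩
    · have h1' := sHerm ((j:ℕ)+(k:ℕ)) (by omega)
      have h2' := sHerm ((j:ℕ)+(k:ℕ)+1) (by omega)
      ext a b
      simp [conjTranspose_apply, h1'.apply, h2'.apply, Complex.conj_ofReal, mul_comm]
    · have := (key x).1
      rw [decompA, Matrix.add_mulVec, Matrix.smul_mulVec, dotProduct_add,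
        dotProduct_smul, ← herm_form_real H0herm x, ← herm_form_real H1herm x]
      have h2 : (0:ℂ) ≤ (((star x ⬝ᵥ (hankelBlk q (n+1) (fun j => s (j+1)) *ᵥ x)).re
          - α * (star x ⬝ᵥ (hankelBlk q (n+1) s *ᵥ x)).re : ℝ) : ℂ) := by
        rw [← Complex.ofReal_zero]; exact Complex.real_le_real.mpr this
      rw [smul_eq_mul]
      convert h2 using 1
      push_cast
      ring
  · refine posSemidef_iff_dotProduct_mulVec.mpr ⟨hankelBlk_isHermitian _ fun j k => ?_, fun x => ?_⟩
    · have h1' := sHerm ((j:ℕ)+(k:ℕ)) (by omega)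
      have h2' := sHerm ((j:ℕ)+(k:ℕ)+1) (by omega)
      ext a b
      simp [conjTranspose_apply, h1'.apply, h2'.apply, Complex.conj_ofReal, mul_comm]
    · have := (key x).2
      rw [decompB, Matrix.sub_mulVec, Matrix.smul_mulVec, dotProduct_sub,
        dotProduct_smul, ← herm_form_real H0herm x, ← herm_form_real H1herm x]
      have h2 : (0:ℂ) ≤ ((β * (star x ⬝ᵥ (hankelBlk q (n+1) s *ᵥ x)).re
          - (star x ⬝ᵥ (hankelBlk q (n+1) (fun j => s (j+1)) *ᵥ x)).re : ℝ) : ℂ) := by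
        rw [← Complex.ofReal_zero]; exact Complex.real_le_real.mpr this
      simp only [smul_eq_mul]
      convert h2 using 1
      push_cast
      ring
end
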